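/- Let G be a finite directed bipartite graph with parts X and R in which every vertex of X has out-degree exactly 1 and every vertex of R has in-degree exactly 1. If G is strongly connected, then G has no cut vertex, i.e., its underlying undirected graph is 2-connected (so G is a strong block). -/

import Mathlib

/-- In a finite directed bipartite graph with parts `X` and `R`, where every `X`-vertex has
out-degree exactly one and every `R`-vertex has in-degree exactly one, strong connectivity
implies that there is no cut vertex: removing any single vertex leaves the underlying
undirected graph connected. -/
theorem strong_block_of_degree_conditions {X R : Type*} [Fintype X] [Fintype R]
    (E1 : X → R → Prop) (E2 : R → X → Prop)
    -- the step relation of the bipartite digraph on `X ⊕ R`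
    (step : X ⊕ R → X ⊕ R → Prop)
    (hstep : ∀ u v, step u v ↔
      (∃ x r, u = Sum.inl x ∧ v = Sum.inr r ∧ E1 x r) ∨
      (∃ r x, u = Sum.inr r ∧ v = Sum.inl x ∧ E2 r x))
    (hout : ∀ x : X, ∃! r : R, E1 x r)
    (hin : ∀ r : R, ∃! x : X, E1 x r)
    (hconn : ∀ u v : X ⊕ R, Relation.ReflTransGen step u v) :
    ∀ w u v : X ⊕ R, u ≠ w → v ≠ w →
      Relation.ReflTransGen (fun a b => (step a b ∨ step b a) ∧ a ≠ w ∧ b ≠ w) u v := by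
  intro w u v hu hv
  set S : X ⊕ R → X ⊕ R → Prop :=
    fun a b => (step a b ∨ step b a) ∧ a ≠ w ∧ b ≠ w with hS
  have hsymm : Symmetric S := by
    rintro a b ⟨h, ha, hb⟩
    exact ⟨h.symm, hb, ha⟩
  suffices h : ∃ hub, ∀ u, u ≠ w → Relation.ReflTransGen S u hub by
    obtain ⟨hub, hall⟩ := h
    exact (hall u hu).trans ((haveI : Std.Symm S := ⟨fun _ _ h => hsymm h⟩; Relation.ReflTransGen.stdSymm (r := S)).symm _ _ (hall v hv))
  rcases w with x0 | r0
  · -- w = inl x0; hub is the unique out-neighbor r0 of x0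
    obtain ⟨r0, hr0, hr0uniq⟩ := hout x0
    refine ⟨Sum.inr r0, ?_⟩
    have key : ∀ u, Relation.ReflTransGen step (Sum.inl x0) u →
        u ≠ Sum.inl x0 → Relation.ReflTransGen S u (Sum.inr r0) := by
      intro u h
      induction h with
      | refl => intro h; exact absurd rfl h
      | @tail b c hpath hstep' ih =>
        intro hne
        by_cases hb : b = Sum.inl x0
        · subst hb
          rcases (hstep _ _).mp hstep' with ⟨x, r, hx, hc, hE⟩ | ⟨r, x, hx, _, _⟩
          · obtain rfl : x = x0 := by injection hx.symm
            obtain rfl : r = r0 := hr0uniq r hE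
            rw [hc]
          · exact absurd hx (by simp)
        · exact (Relation.ReflTransGen.single ⟨Or.inr hstep', hne, hb⟩).trans (ih hb)
    exact fun u hu => key u (hconn _ _) hu
  · -- w = inr r0; hub is the unique in-neighbor x0 of r0
    obtain ⟨x0, hx0, hx0uniq⟩ := hin r0
    refine ⟨Sum.inl x0, ?_⟩
    have key : ∀ u, Relation.ReflTransGen step u (Sum.inl x0) →
        u ≠ Sum.inr r0 → Relation.ReflTransGen S u (Sum.inl x0) := by
      intro u h
      induction h using Relation.ReflTransGen.head_induction_on with
      | refl => intro _; exact Relation.ReflTransGen.refl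
      | @head a c hstep' hpath ih =>
        intro hne
        by_cases hc : c = Sum.inr r0
        · subst hc
          rcases (hstep _ _).mp hstep' with ⟨x, r, ha, hr, hE⟩ | ⟨r, x, _, hx, _⟩
          · obtain rfl : r = r0 := by injection hr.symm
            obtain rfl : x = x0 := hx0uniq x hE
            rw [ha]
          · exact absurd hx (by simp)
        · exact (Relation.ReflTransGen.single ⟨Or.inl hstep', hne, hc⟩).trans (ih hc)
    exact fun u hu => key u (hconn _ _) hu
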